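/- With the operator A from the DLAS tree recursion: if p ≤ 1/2, W is a nonnegative integer-valued random variable with finite mean, and X = max(W, 1), then P(AX = 0) ≥ 4^{−E[W] − 1} for all d ≥ 2. Consequently P(AW = 0) ≥ 4^{−E[W]−1}. -/

import Mathlib

/-- Convolution of two mass functions on ℕ. -/
def convPMF (f g : ℕ → ℝ) : ℕ → ℝ :=
  fun k => ∑ j ∈ Finset.range (k + 1), f j * g (k - j)

/-- Point mass at `0`. -/
def deltaPMF : ℕ → ℝ := fun k => if k = 0 then 1 else 0

/-- Distribution of the independent sum of a list of ℕ-valued distributions. -/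
def convList : List (ℕ → ℝ) → (ℕ → ℝ)
  | [] => deltaPMF
  | f :: fs => convPMF f (convList fs)

/-- The mass function of the `q`-thinning `Bin(X, q)` of a distribution `P` on ℕ. -/
noncomputable def thinPMF (P : ℕ → ℝ) (q : ℝ) : ℕ → ℝ :=
  fun k => ∑' n : ℕ, P n * (Nat.choose n k : ℝ) * q ^ k * (1 - q) ^ (n - k)

/-- Mass function of `X = max(W, 1)` when `W` has mass function `P`. -/
def maxOnePMF (P : ℕ → ℝ) : ℕ → ℝ := fun k =>
  if k = 0 then 0 else if k = 1 then P 0 + P 1 else P k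

/-- Mass function of `X + Y` where `X ≥ 1` has mass function `M` (with `M 0 = 0`) and `Y`,
independent of `X`, is `±1`-valued with `P(Y = 1) = p`. -/
def stepPMF (p : ℝ) (M : ℕ → ℝ) : ℕ → ℝ := fun k =>
  p * M (k - 1) + (1 - p) * M (k + 1)

/-- The mass function of `(W + Y)⁺`. -/
def plusPMF (p : ℝ) (P : ℕ → ℝ) : ℕ → ℝ := fun k =>
  if k = 0 then (1 - p) * (P 0 + P 1) else p * P (k - 1) + (1 - p) * P (k + 1)

lemma summable_mul_pow {f : ℕ → ℝ} (hf : ∀ n, 0 ≤ f n) (hs : Summable f)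
    {t : ℝ} (ht0 : 0 ≤ t) (ht1 : t ≤ 1) : Summable (fun n => f n * t ^ n) := by
  refine hs.of_nonneg_of_le (fun n => mul_nonneg (hf n) (pow_nonneg ht0 n)) (fun n => ?_)
  exact mul_le_of_le_one_right (hf n) (pow_le_one₀ ht0 ht1)

lemma quarter_le (d : ℕ) (hd : 2 ≤ d) : (1/4 : ℝ) ≤ (1 - 1/(d:ℝ)) ^ d := by
  have hd1 : (1:ℝ) ≤ (d:ℝ) - 1 := by
    have : (2:ℝ) ≤ (d:ℝ) := by exact_mod_cast hd
    linarith
  have hdpos : (0:ℝ) < d := by linarith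
  set u : ℝ := 1/((d:ℝ)-1) with hu
  have hu0 : 0 < u := by positivity
  have hinv : (1 - 1/(d:ℝ)) * (1 + u) = 1 := by
    rw [hu]
    field_simp
    ring
  -- (1+u)^d ≤ 4
  have key : (1 + u) ^ d ≤ 4 := by
    rcases Nat.lt_or_ge d 4 with h4 | h4
    · interval_cases d
      · norm_num [hu]
      · have : u = 1/2 := by norm_num [hu]
        rw [this]; norm_num
    · -- d ≥ 4 : (1+u)^(d-1) ≤ exp 1, 1+u ≤ 4/3
      have hu3 : u ≤ 1/3 := by
        rw [hu]
        rw [div_le_div_iff₀ (by linarith) (by norm_num)]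
        have : (4:ℝ) ≤ (d:ℝ) := by exact_mod_cast h4
        linarith
      have h1 : (1 + u) ^ (d - 1) ≤ Real.exp 1 := by
        have hle : (1 + u) ^ (d-1) ≤ Real.exp u ^ (d-1) :=
          pow_le_pow_left₀ (by positivity) (by linarith [Real.add_one_le_exp u]) _
        have hcast : ((d-1 : ℕ) : ℝ) = (d:ℝ) - 1 := by
          have h1d : (1:ℕ) ≤ d := by omega
          push_cast [Nat.cast_sub h1d]; ring
        have hmu : ((d-1 : ℕ) : ℝ) * u = 1 := by
          rw [hcast, hu, mul_one_div, div_self (by linarith)]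
        calc (1 + u) ^ (d-1) ≤ Real.exp u ^ (d-1) := hle
          _ = Real.exp (((d-1:ℕ):ℝ) * u) := (Real.exp_nat_mul u (d-1)).symm
          _ = Real.exp 1 := by rw [hmu]
      have hdd : d = (d - 1) + 1 := by omega
      calc (1+u)^d = (1+u)^(d-1) * (1+u) := by rw [← pow_succ, ← hdd]
        _ ≤ Real.exp 1 * (4/3) := by
            apply mul_le_mul h1 (by linarith) (by positivity) (Real.exp_pos 1).le
        _ ≤ 4 := by nlinarith [Real.exp_one_lt_d9]
  -- conclude
  have hpos : 0 < 1 + u := by linarith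
  have ht : (1 - 1/(d:ℝ)) = (1+u)⁻¹ := by
    field_simp at hinv ⊢
    linarith [hinv]
  rw [ht]
  rw [inv_pow]
  rw [le_inv_comm₀ (by norm_num) (by positivity)]
  calc (1+u)^d ≤ 4 := key
    _ = (1/4 : ℝ)⁻¹ := by norm_num

lemma gen_ge_rpow {f : ℕ → ℝ} (hf : ∀ n, 0 ≤ f n) (hS : Summable f) (h1 : ∑' n, f n = 1)
    (hm : Summable fun n : ℕ => (n:ℝ) * f n) {t : ℝ} (ht0 : 0 < t) (ht1 : t ≤ 1) :
    t ^ (∑' n : ℕ, (n:ℝ) * f n) ≤ ∑' n, f n * t ^ n := by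
  set μ := ∑' n : ℕ, (n:ℝ) * f n with hμ
  set L := Real.log t with hL
  -- pointwise bound
  have hpt : ∀ n : ℕ, f n * (t ^ μ * (1 + ((n:ℝ) - μ) * L)) ≤ f n * t ^ n := by
    intro n
    apply mul_le_mul_of_nonneg_left _ (hf n)
    have h1 : t ^ μ = Real.exp (L * μ) := by rw [Real.rpow_def_of_pos ht0]
    have h2 : (t:ℝ) ^ n = Real.exp (L * n) := by
      rw [← Real.rpow_natCast t n, Real.rpow_def_of_pos ht0]
    rw [h1, h2]
    have := Real.add_one_le_exp (((n:ℝ) - μ) * L)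
    calc Real.exp (L * μ) * (1 + ((n:ℝ) - μ) * L)
        ≤ Real.exp (L * μ) * Real.exp (((n:ℝ) - μ) * L) := by
          apply mul_le_mul_of_nonneg_left (by linarith) (Real.exp_pos _).le
      _ = Real.exp (L * n) := by rw [← Real.exp_add]; congr 1; ring
  -- summability of lhs
  have hlhs : Summable (fun n => f n * (t ^ μ * (1 + ((n:ℝ) - μ) * L))) := by
    have heq : (fun n => f n * (t ^ μ * (1 + ((n:ℝ) - μ) * L)))
        = fun n => (t ^ μ * (1 - μ * L)) * f n + (t ^ μ * L) * ((n:ℝ) * f n) := by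
      funext n; ring
    rw [heq]
    exact ((hS.mul_left _).add (hm.mul_left _))
  have hrhs : Summable (fun n => f n * t ^ n) := summable_mul_pow hf hS ht0.le ht1
  have hle := Summable.tsum_le_tsum hpt hlhs hrhs
  -- compute lhs tsum
  have hcomp : ∑' n, f n * (t ^ μ * (1 + ((n:ℝ) - μ) * L)) = t ^ μ := by
    have heq : (fun n => f n * (t ^ μ * (1 + ((n:ℝ) - μ) * L)))
        = fun n => (t ^ μ * (1 - μ * L)) * f n + (t ^ μ * L) * ((n:ℝ) * f n) := by
      funext n; ring
    rw [heq, Summable.tsum_add (hS.mul_left _) (hm.mul_left _), tsum_mul_left, tsum_mul_left,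
      h1, ← hμ]
    ring
  rw [hcomp] at hle
  exact hle

lemma gen_step {M : ℕ → ℝ} (hM : ∀ n, 0 ≤ M n) (hM0 : M 0 = 0) (hs : Summable M)
    {p t : ℝ} (hp0 : 0 ≤ p) (hp : p ≤ 1/2) (ht0 : 0 < t) (ht1 : t ≤ 1) :
    Summable (fun n => stepPMF p M n * t ^ n) ∧
    ∑' n, M n * t ^ n ≤ ∑' n, stepPMF p M n * t ^ n := by
  have hgs : Summable (fun n => M n * t ^ n) := summable_mul_pow hM hs ht0.le ht1
  set S := ∑' n, M n * t ^ n with hSdef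
  have hSnn : 0 ≤ S := tsum_nonneg fun n => mul_nonneg (hM n) (pow_nonneg ht0.le n)
  -- a n = M (n-1) * t^n
  have hsa : Summable (fun n : ℕ => M (n-1) * t ^ n) := by
    apply (summable_nat_add_iff 1).mp
    have : (fun n : ℕ => M ((n+1)-1) * t ^ (n+1)) = fun n => t * (M n * t ^ n) := by
      funext n; rw [Nat.add_sub_cancel, pow_succ]; ring
    rw [this]
    exact hgs.mul_left t
  have hA : ∑' n, M (n-1) * t ^ n = t * S := by
    rw [Summable.tsum_eq_zero_add hsa]
    simp only [Nat.zero_sub, hM0, zero_mul, pow_zero, mul_one, zero_add,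
      Nat.add_sub_cancel]
    have : (fun n : ℕ => M n * t ^ (n+1)) = fun n => t * (M n * t ^ n) := by
      funext n; rw [pow_succ]; ring
    rw [this, tsum_mul_left]
  -- b n = M (n+1) * t^n  with  t * B = S
  have hsb : Summable (fun n : ℕ => M (n+1) * t ^ n) := by
    have h1 : Summable (fun n : ℕ => M (n+1)) := (summable_nat_add_iff 1).mpr hs
    exact summable_mul_pow (fun n => hM _) h1 ht0.le ht1
  have hB : S = t * ∑' n, M (n+1) * t ^ n := by
    have e1 : ∑' n:ℕ, M (n+1) * t ^ (n+1) = ∑' n:ℕ, t * (M (n+1) * t ^ n) :=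
      tsum_congr fun n => by rw [pow_succ]; ring
    rw [hSdef, Summable.tsum_eq_zero_add hgs, hM0, e1, tsum_mul_left]
    simp
  -- step expansion
  have hexp : (fun n => stepPMF p M n * t ^ n)
      = fun n => p * (M (n-1) * t ^ n) + (1-p) * (M (n+1) * t ^ n) := by
    funext n; simp only [stepPMF]; ring
  have hsum : Summable (fun n => stepPMF p M n * t ^ n) := by
    rw [hexp]; exact (hsa.mul_left p).add (hsb.mul_left (1-p))
  refine ⟨hsum, ?_⟩
  have htsum : ∑' n, stepPMF p M n * t ^ n
      = p * (t * S) + (1-p) * ∑' n, M (n+1) * t ^ n := by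
    rw [hexp, Summable.tsum_add (hsa.mul_left p) (hsb.mul_left (1-p)), tsum_mul_left,
      tsum_mul_left, hA]
  rw [htsum]
  -- need S ≤ p t S + (1-p) B  with t B = S
  set B := ∑' n, M (n+1) * t ^ n with hBdef
  have hBnn : 0 ≤ B := tsum_nonneg fun n => mul_nonneg (hM _) (pow_nonneg ht0.le n)
  nlinarith [mul_nonneg (mul_nonneg hSnn (sub_nonneg.2 ht1))
      (show 0 ≤ 1 - p - p * t by nlinarith), hB, ht0]

lemma maxOne_facts {P : ℕ → ℝ} (hP : ∀ n, 0 ≤ P n) (hsum : ∑' n, P n = 1)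
    (hS : Summable P) (hm : Summable fun n : ℕ => (n:ℝ) * P n) :
    (∀ n, 0 ≤ maxOnePMF P n) ∧ maxOnePMF P 0 = 0 ∧ Summable (maxOnePMF P) ∧
    (∑' n, maxOnePMF P n = 1) ∧ (Summable fun n : ℕ => (n:ℝ) * maxOnePMF P n) ∧
    (∑' n : ℕ, (n:ℝ) * maxOnePMF P n = P 0 + ∑' n : ℕ, (n:ℝ) * P n) := by
  have hdec : ∀ n, maxOnePMF P n
      = P n + (if n = 1 then P 0 else 0) - (if n = 0 then P 0 else 0) := by
    intro n
    match n with
    | 0 => simp [maxOnePMF]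
    | 1 => simp [maxOnePMF]; ring
    | (k+2) => simp [maxOnePMF]
  have hind1 : Summable (fun n : ℕ => if n = 1 then P 0 else 0) :=
    (hasSum_ite_eq 1 (P 0)).summable
  have hind0 : Summable (fun n : ℕ => if n = 0 then P 0 else 0) :=
    (hasSum_ite_eq 0 (P 0)).summable
  have hMsum : Summable (maxOnePMF P) := by
    have : maxOnePMF P = fun n => P n + (if n = 1 then P 0 else 0)
        - (if n = 0 then P 0 else 0) := funext hdec
    rw [this]
    exact (hS.add hind1).sub hind0
  have hMnn : ∀ n, 0 ≤ maxOnePMF P n := by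
    intro n
    match n with
    | 0 => simp [maxOnePMF]
    | 1 => simp [maxOnePMF]; linarith [hP 0, hP 1]
    | (k+2) => simpa [maxOnePMF] using hP (k+2)
  have hmdec : ∀ n : ℕ, (n:ℝ) * maxOnePMF P n
      = (n:ℝ) * P n + (if n = 1 then P 0 else 0) := by
    intro n
    match n with
    | 0 => simp [maxOnePMF]
    | 1 => simp [maxOnePMF]; ring
    | (k+2) => simp [maxOnePMF]
  have hmM : Summable (fun n : ℕ => (n:ℝ) * maxOnePMF P n) := by
    have : (fun n : ℕ => (n:ℝ) * maxOnePMF P n)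
        = fun n : ℕ => (n:ℝ) * P n + (if n = 1 then P 0 else 0) := funext hmdec
    rw [this]; exact hm.add hind1
  refine ⟨hMnn, by simp [maxOnePMF], hMsum, ?_, hmM, ?_⟩
  · have : maxOnePMF P = fun n => P n + (if n = 1 then P 0 else 0)
        - (if n = 0 then P 0 else 0) := funext hdec
    rw [this, Summable.tsum_sub (hS.add hind1) hind0, Summable.tsum_add hS hind1,
      tsum_ite_eq, tsum_ite_eq, hsum]
    ring
  · have : (fun n : ℕ => (n:ℝ) * maxOnePMF P n)
        = fun n : ℕ => (n:ℝ) * P n + (if n = 1 then P 0 else 0) := funext hmdec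
    rw [this, Summable.tsum_add hm hind1, tsum_ite_eq]
    ring

lemma conv_gen {f g : ℕ → ℝ} (hf : ∀ n, 0 ≤ f n) (hg : ∀ n, 0 ≤ g n)
    {t : ℝ} (ht0 : 0 ≤ t)
    (hsf : Summable (fun n => f n * t ^ n)) (hsg : Summable (fun n => g n * t ^ n)) :
    (∀ k, 0 ≤ convPMF f g k) ∧ Summable (fun k => convPMF f g k * t ^ k) ∧
      ∑' k, convPMF f g k * t ^ k = (∑' n, f n * t ^ n) * (∑' n, g n * t ^ n) := by
  set F := fun n => f n * t ^ n with hF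
  set G := fun n => g n * t ^ n with hG
  have hFnn : ∀ n, 0 ≤ F n := fun n => mul_nonneg (hf n) (pow_nonneg ht0 n)
  have hGnn : ∀ n, 0 ≤ G n := fun n => mul_nonneg (hg n) (pow_nonneg ht0 n)
  have hFn : Summable fun n => ‖F n‖ := by
    simpa [Real.norm_eq_abs, abs_of_nonneg (hFnn _)] using hsf
  have hGn : Summable fun n => ‖G n‖ := by
    simpa [Real.norm_eq_abs, abs_of_nonneg (hGnn _)] using hsg
  have hexp : ∀ k, convPMF f g k * t ^ k
      = ∑ j ∈ Finset.range (k+1), F j * G (k - j) := by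
    intro k
    rw [convPMF, Finset.sum_mul]
    apply Finset.sum_congr rfl
    intro j hj
    have hjk : j ≤ k := Finset.mem_range_succ_iff.mp hj
    have : t ^ k = t ^ j * t ^ (k - j) := by
      rw [← pow_add, Nat.add_sub_cancel' hjk]
    rw [hF, hG]
    simp only
    rw [this]; ring
  have hsum : Summable (fun k => convPMF f g k * t ^ k) := by
    have := (summable_norm_sum_mul_range_of_summable_norm hFn hGn).of_norm
    apply this.congr
    intro k; rw [hexp k]
  have hnn : ∀ k, 0 ≤ convPMF f g k := by
    intro k
    apply Finset.sum_nonneg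
    intro j _
    exact mul_nonneg (hf j) (hg _)
  refine ⟨hnn, hsum, ?_⟩
  rw [tsum_mul_tsum_eq_tsum_sum_range_of_summable_norm hFn hGn]
  exact (tsum_congr hexp).symm ▸ rfl

lemma convList_gen (f : ℕ → ℝ) (hf : ∀ n, 0 ≤ f n) {t : ℝ} (ht0 : 0 ≤ t)
    (hsf : Summable fun n => f n * t ^ n) (d : ℕ) :
    (∀ k, 0 ≤ convList (List.replicate d f) k) ∧
    Summable (fun k => convList (List.replicate d f) k * t ^ k) ∧
    ∑' k, convList (List.replicate d f) k * t ^ k = (∑' n, f n * t ^ n) ^ d := by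
  induction d with
  | zero =>
    refine ⟨fun k => by simp [convList, deltaPMF]; positivity, ?_, ?_⟩
    · have : (fun k : ℕ => convList (List.replicate 0 f) k * t ^ k)
          = fun k => if k = 0 then 1 else 0 := by
        funext k; simp [convList, deltaPMF]; split <;> simp_all
      rw [this]; exact (hasSum_ite_eq 0 1).summable
    · have : (fun k : ℕ => convList (List.replicate 0 f) k * t ^ k)
          = fun k => if k = 0 then 1 else 0 := by
        funext k; simp [convList, deltaPMF]; split <;> simp_all
      rw [this, tsum_ite_eq]; simp
  | succ d ih =>
    obtain ⟨ihnn, ihs, ihe⟩ := ih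
    have hrep : List.replicate (d+1) f = f :: List.replicate d f := rfl
    rw [hrep]
    have hc := conv_gen hf ihnn ht0 hsf ihs
    refine ⟨hc.1, hc.2.1, ?_⟩
    show ∑' k, convPMF f (convList (List.replicate d f)) k * t ^ k = _
    rw [hc.2.2, ihe, pow_succ]
    ring

lemma gen_plus {P : ℕ → ℝ} (hP : ∀ n, 0 ≤ P n) (hS : Summable P)
    {p t : ℝ} (hp0 : 0 ≤ p) (hp : p ≤ 1/2) (ht0 : 0 < t) (ht1 : t ≤ 1) :
    (∀ n, 0 ≤ plusPMF p P n) ∧ Summable (fun n => plusPMF p P n * t ^ n) ∧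
    ∑' n, maxOnePMF P n * t ^ n ≤ ∑' n, plusPMF p P n * t ^ n := by
  have hgs : Summable (fun n => P n * t ^ n) := summable_mul_pow hP hS ht0.le ht1
  set S := ∑' n, P n * t ^ n with hSdef
  have hp1 : p ≤ 1 := by linarith
  have hnn : ∀ n, 0 ≤ plusPMF p P n := by
    intro n
    match n with
    | 0 =>
      have := hP 0; have := hP 1
      norm_num [plusPMF]
      nlinarith
    | (k+1) =>
      simp only [plusPMF, Nat.add_sub_cancel, if_neg (Nat.succ_ne_zero k)]
      have := hP k; have := hP (k+2); nlinarith
  -- summability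
  have hP2 : Summable (fun n : ℕ => P (n+2)) := (summable_nat_add_iff 2).mpr hS
  have s1 : Summable (fun n : ℕ => P n * t ^ (n+1)) := by
    have h : (fun n : ℕ => P n * t ^ (n+1)) = fun n => t * (P n * t ^ n) := by
      funext n; rw [pow_succ]; ring
    rw [h]; exact hgs.mul_left t
  have s2' : Summable (fun n : ℕ => P (n+2) * t ^ n) :=
    summable_mul_pow (fun n => hP _) hP2 ht0.le ht1
  have s2 : Summable (fun n : ℕ => P (n+2) * t ^ (n+1)) := by
    have h : (fun n : ℕ => P (n+2) * t ^ (n+1)) = fun n => t * (P (n+2) * t ^ n) := by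
      funext n; rw [pow_succ]; ring
    rw [h]; exact s2'.mul_left t
  have hshift : ∀ n : ℕ, plusPMF p P (n+1) * t ^ (n+1)
      = p * (P n * t ^ (n+1)) + (1-p) * (P (n+2) * t ^ (n+1)) := by
    intro n
    simp only [plusPMF, Nat.add_sub_cancel, if_neg (Nat.succ_ne_zero n)]
    ring
  have hstail : Summable (fun n : ℕ => plusPMF p P (n+1) * t ^ (n+1)) := by
    have h : (fun n : ℕ => plusPMF p P (n+1) * t ^ (n+1))
        = fun n => p * (P n * t ^ (n+1)) + (1-p) * (P (n+2) * t ^ (n+1)) := funext hshift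
    rw [h]; exact (s1.mul_left p).add (s2.mul_left (1-p))
  have hsum : Summable (fun n => plusPMF p P n * t ^ n) :=
    (summable_nat_add_iff (f := fun n => plusPMF p P n * t ^ n) 1).mp hstail
  refine ⟨hnn, hsum, ?_⟩
  set C2 := ∑' n : ℕ, P (n+2) * t ^ (n+1) with hC2def
  have hC2nn : 0 ≤ C2 := tsum_nonneg fun n => mul_nonneg (hP _) (pow_nonneg ht0.le _)
  have hts : ∑' n : ℕ, P n * t ^ (n+1) = t * S := by
    rw [hSdef, ← tsum_mul_left]
    exact tsum_congr fun n => by rw [pow_succ]; ring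
  have hT : ∑' n, plusPMF p P n * t ^ n
      = (1-p) * (P 0 + P 1) + p * (t * S) + (1-p) * C2 := by
    rw [Summable.tsum_eq_zero_add hsum]
    have h0 : plusPMF p P 0 * t ^ 0 = (1-p) * (P 0 + P 1) := by simp [plusPMF]
    have h1 : ∑' n : ℕ, plusPMF p P (n+1) * t ^ (n+1)
        = p * (t * S) + (1-p) * C2 := by
      rw [tsum_congr hshift, Summable.tsum_add (s1.mul_left p) (s2.mul_left (1-p)),
        tsum_mul_left, tsum_mul_left, hts]
    rw [h0, h1]; ring
  have htC2 : t * C2 = S - P 0 - P 1 * t := by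
    have hgs1 : Summable (fun n : ℕ => P (n+1) * t ^ (n+1)) :=
      (summable_nat_add_iff (f := fun n => P n * t ^ n) 1).mpr hgs
    have e1 : S = P 0 + ∑' n : ℕ, P (n+1) * t ^ (n+1) := by
      rw [hSdef, Summable.tsum_eq_zero_add hgs]; simp
    have e2 : ∑' n : ℕ, P (n+1) * t ^ (n+1)
        = P 1 * t + ∑' n : ℕ, P (n+2) * t ^ (n+2) := by
      rw [Summable.tsum_eq_zero_add hgs1]; norm_num
    have e3 : ∑' n : ℕ, P (n+2) * t ^ (n+2) = t * C2 := by
      rw [hC2def, ← tsum_mul_left]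
      exact tsum_congr fun n => by rw [pow_succ]; ring
    rw [e1, e2, e3]; ring
  -- LHS value
  have hMnn : ∀ n, 0 ≤ maxOnePMF P n := by
    intro n
    match n with
    | 0 => simp [maxOnePMF]
    | 1 => simp [maxOnePMF]; linarith [hP 0, hP 1]
    | (k+2) => simpa [maxOnePMF] using hP (k+2)
  have hMdec : (fun n : ℕ => maxOnePMF P n * t ^ n)
      = fun n : ℕ => P n * t ^ n + (if n = 1 then P 0 * t else 0)
          - (if n = 0 then P 0 else 0) := by
    funext n
    match n with
    | 0 => simp [maxOnePMF]
    | 1 => simp [maxOnePMF]; ring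
    | (k+2) => simp [maxOnePMF]
  have hind1 : Summable (fun n : ℕ => if n = 1 then P 0 * t else 0) :=
    (hasSum_ite_eq 1 (P 0 * t)).summable
  have hind0 : Summable (fun n : ℕ => if n = 0 then P 0 else 0) :=
    (hasSum_ite_eq 0 (P 0)).summable
  have hSM : ∑' n, maxOnePMF P n * t ^ n = S + P 0 * t - P 0 := by
    rw [hMdec, Summable.tsum_sub (hgs.add hind1) hind0, Summable.tsum_add hgs hind1,
      tsum_ite_eq, tsum_ite_eq]
  have hSMnn : 0 ≤ S + P 0 * t - P 0 := by
    rw [← hSM]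
    exact tsum_nonneg fun n => mul_nonneg (hMnn n) (pow_nonneg ht0.le n)
  rw [hSM, hT]
  have key : 0 ≤ (1-t) * (1-p-p*t) :=
    mul_nonneg (by linarith) (by nlinarith [mul_le_of_le_one_right hp0 ht1])
  have hE : t * (((1-p) * (P 0 + P 1) + p * (t * S) + (1-p) * C2)
        - (S + P 0 * t - P 0))
      = ((1-t)*(1-p-p*t)) * (S + P 0 * t - P 0) + p * P 0 * t^2 * (1-t) := by
    linear_combination (1-p) * htC2
  have hE2 : 0 ≤ t * (((1-p) * (P 0 + P 1) + p * (t * S) + (1-p) * C2)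
      - (S + P 0 * t - P 0)) := by
    rw [hE]
    have h1 := mul_nonneg key hSMnn
    have h2 : 0 ≤ p * P 0 * t^2 * (1-t) := by
      apply mul_nonneg (mul_nonneg (mul_nonneg hp0 (hP 0)) (sq_nonneg t))
      linarith
    linarith
  nlinarith [hE2, ht0]

lemma final_bound (d : ℕ) (hd : 2 ≤ d) {f : ℕ → ℝ} (hf : ∀ n, 0 ≤ f n)
    {r : ℝ} (hr : 0 ≤ r)
    (hsf : Summable (fun n => f n * (1 - 1/(d:ℝ)) ^ n))
    (hle : (1 - 1/(d:ℝ)) ^ r ≤ ∑' n, f n * (1 - 1/(d:ℝ)) ^ n) :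
    (4:ℝ) ^ (-r) ≤ thinPMF (convList (List.replicate d f)) (1 / (d:ℝ)) 0 := by
  have hd2 : (2:ℝ) ≤ (d:ℝ) := by exact_mod_cast hd
  set t : ℝ := 1 - 1/(d:ℝ) with htdef
  have ht0 : 0 < t := by
    rw [htdef]
    have : 1/(d:ℝ) ≤ 1/2 := by
      apply div_le_div_of_nonneg_left (by norm_num) (by norm_num) hd2
    linarith
  have ht1 : t ≤ 1 := by
    rw [htdef]
    have : 0 ≤ 1/(d:ℝ) := by positivity
    linarith
  obtain ⟨hnn, hsum, heq⟩ := convList_gen f hf ht0.le hsf d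
  have hthin : thinPMF (convList (List.replicate d f)) (1 / (d:ℝ)) 0
      = ∑' n, convList (List.replicate d f) n * t ^ n := by
    unfold thinPMF
    apply tsum_congr
    intro n
    simp [htdef]
  rw [hthin, heq]
  have h2 : (t ^ r) ^ (d:ℕ) = ((t ^ (d:ℕ) : ℝ)) ^ r := by
    calc (t ^ r) ^ (d:ℕ) = (t ^ r) ^ ((d:ℕ):ℝ) := (Real.rpow_natCast _ d).symm
      _ = t ^ (r * ((d:ℕ):ℝ)) := (Real.rpow_mul ht0.le r _).symm
      _ = t ^ (((d:ℕ):ℝ) * r) := by rw [mul_comm]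
      _ = (t ^ ((d:ℕ):ℝ)) ^ r := Real.rpow_mul ht0.le _ r
      _ = ((t ^ (d:ℕ) : ℝ)) ^ r := by rw [Real.rpow_natCast]
  calc (4:ℝ) ^ (-r) = ((4:ℝ) ^ r)⁻¹ := Real.rpow_neg (by norm_num) r
    _ = ((4:ℝ)⁻¹) ^ r := (Real.inv_rpow (by norm_num) r).symm
    _ = ((1/4 : ℝ)) ^ r := by norm_num
    _ ≤ ((t ^ (d:ℕ) : ℝ)) ^ r := Real.rpow_le_rpow (by norm_num) (quarter_le d hd) hr
    _ = (t ^ r) ^ (d:ℕ) := h2.symm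
    _ ≤ (∑' n, f n * t ^ n) ^ (d:ℕ) :=
        pow_le_pow_left₀ (Real.rpow_nonneg ht0.le r) hle d

/-- Let `d ≥ 2`, `p ≤ 1/2`, `W` a nonnegative integer-valued random
variable with finite mean and `X = max(W, 1)`.  With `AX = Bin(∑_{i=1}^d (X_i + Y_i), 1/d)`
(and `AW = Bin(∑_{i=1}^d (W_i + Y_i)⁺, 1/d)`), one has
`P(AX = 0) ≥ 4^{−E[W]−1}` and consequently `P(AW = 0) ≥ 4^{−E[W]−1}`. -/
theorem stmt8 (d : ℕ) (hd : 2 ≤ d) (p : ℝ) (hp0 : 0 ≤ p) (hp : p ≤ 1 / 2)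
    (P : ℕ → ℝ) (hnonneg : ∀ n, 0 ≤ P n) (hsum : ∑' n, P n = 1)
    (hmean : Summable (fun n : ℕ => (n : ℝ) * P n)) :
    (4 : ℝ) ^ (-(∑' k : ℕ, (k : ℝ) * P k) - 1)
        ≤ thinPMF (convList (List.replicate d (stepPMF p (maxOnePMF P)))) (1 / (d : ℝ)) 0
      ∧ (4 : ℝ) ^ (-(∑' k : ℕ, (k : ℝ) * P k) - 1)
        ≤ thinPMF (convList (List.replicate d (plusPMF p P))) (1 / (d : ℝ)) 0 := by
  have hS : Summable P := by
    by_contra h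
    rw [tsum_eq_zero_of_not_summable h] at hsum
    norm_num at hsum
  set μ := ∑' k : ℕ, (k : ℝ) * P k with hμdef
  have hμ0 : 0 ≤ μ := tsum_nonneg fun n => mul_nonneg (Nat.cast_nonneg n) (hnonneg n)
  have hd2 : (2:ℝ) ≤ (d:ℝ) := by exact_mod_cast hd
  set t : ℝ := 1 - 1/(d:ℝ) with htdef
  have ht0 : 0 < t := by
    rw [htdef]
    have : 1/(d:ℝ) ≤ 1/2 := by
      apply div_le_div_of_nonneg_left (by norm_num) (by norm_num) hd2
    linarith
  have ht1 : t ≤ 1 := by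
    rw [htdef]
    have : 0 ≤ 1/(d:ℝ) := by positivity
    linarith
  obtain ⟨hMnn, hM0, hMsum, hMone, hMmean, hMmeanval⟩ :=
    maxOne_facts hnonneg hsum hS hmean
  -- Jensen on maxOnePMF
  have hJ : t ^ (∑' n : ℕ, (n:ℝ) * maxOnePMF P n) ≤ ∑' n, maxOnePMF P n * t ^ n :=
    gen_ge_rpow hMnn hMsum hMone hMmean ht0 ht1
  have hP0le : P 0 ≤ 1 := by
    rw [← hsum]
    exact Summable.le_tsum hS 0 fun i _ => hnonneg i
  have hexp : t ^ (μ + 1) ≤ t ^ (∑' n : ℕ, (n:ℝ) * maxOnePMF P n) := by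
    apply Real.rpow_le_rpow_of_exponent_ge ht0 ht1
    rw [hMmeanval, ← hμdef]
    linarith
  have hbase : t ^ (μ + 1) ≤ ∑' n, maxOnePMF P n * t ^ n := le_trans hexp hJ
  have hμr : 0 ≤ μ + 1 := by linarith
  have hexpeq : -μ - 1 = -(μ + 1) := by ring
  constructor
  · -- step part
    obtain ⟨hssum, hsle⟩ := gen_step hMnn hM0 hMsum hp0 hp ht0 ht1
    have hsnn : ∀ n, 0 ≤ stepPMF p (maxOnePMF P) n := by
      intro n
      have h1 := hMnn (n-1); have h2 := hMnn (n+1)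
      simp only [stepPMF]
      nlinarith
    rw [hexpeq]
    exact final_bound d hd hsnn hμr hssum (le_trans hbase hsle)
  · -- plus part
    obtain ⟨hpnn, hpsum, hple⟩ := gen_plus hnonneg hS hp0 hp ht0 ht1
    rw [hexpeq]
    exact final_bound d hd hpnn hμr hpsum (le_trans hbase hple)
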